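/- Let G be a locally compact Hausdorff group, A a unital C*-algebra, and α = ({D_t}_{t∈G}, {α_t}_{t∈G}) a partial action of G on A. Then there exists an open subgroup H of G such that D_t = A for every t ∈ H (so α restricted to H is a global action). In particular, if G is connected, then D_t = A for every t ∈ G, i.e. every partial action of a connected group on a unital C*-algebra is a global action. -/

import Mathlib

/-- A partial action of a topological group `G` on a unital C*-algebra `A`: a family of
closed two-sided ideals `dom t` together with maps `act t` restricting to
*-isomorphisms `dom t⁻¹ → dom t`, such that `dom 1 = A`, `act 1 = id`, `act (s * t)`
extends `act s ∘ act t`, the family of ideals is continuous, and `(t, x) ↦ act t x` is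
continuous. -/
structure CStarPartialAction (G A : Type*) [Group G] [TopologicalSpace G]
    [NormedRing A] [StarRing A] [NormedAlgebra ℂ A] where
  dom : G → Set A
  act : G → A → A
  isClosed_dom : ∀ t, IsClosed (dom t)
  zero_mem : ∀ t, (0 : A) ∈ dom t
  add_mem : ∀ t, ∀ x ∈ dom t, ∀ y ∈ dom t, x + y ∈ dom t
  smul_mem : ∀ t (c : ℂ), ∀ x ∈ dom t, c • x ∈ dom t
  mul_mem_left : ∀ t (a : A), ∀ x ∈ dom t, a * x ∈ dom t
  mul_mem_right : ∀ t (a : A), ∀ x ∈ dom t, x * a ∈ dom t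
  bijOn : ∀ t, Set.BijOn (act t) (dom t⁻¹) (dom t)
  act_add : ∀ t, ∀ x ∈ dom t⁻¹, ∀ y ∈ dom t⁻¹, act t (x + y) = act t x + act t y
  act_smul : ∀ t (c : ℂ), ∀ x ∈ dom t⁻¹, act t (c • x) = c • act t x
  act_mul : ∀ t, ∀ x ∈ dom t⁻¹, ∀ y ∈ dom t⁻¹, act t (x * y) = act t x * act t y
  act_star : ∀ t, ∀ x ∈ dom t⁻¹, act t (star x) = star (act t x)
  dom_one : dom 1 = Set.univ
  act_one : ∀ x, act 1 x = x
  act_comp : ∀ s t x, x ∈ dom t⁻¹ → act t x ∈ dom s⁻¹ →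
    x ∈ dom (s * t)⁻¹ ∧ act (s * t) x = act s (act t x)
  isOpen_hit : ∀ U : Set A, IsOpen U → IsOpen {t : G | (U ∩ dom t).Nonempty}
  continuousOn : ContinuousOn (fun p : G × A => act p.1 p.2) {p : G × A | p.2 ∈ dom p.1⁻¹}

/-- If `α` is a partial action of a locally compact Hausdorff group `G` on a unital
C*-algebra `A`, there is an open subgroup `H ≤ G` with `D_t = A` for all `t ∈ H`, so
that `α` restricted to `H` is a global action; in particular, any partial action of a
connected group on a unital C*-algebra is a global action. -/
theorem CStarPartialAction.global_of_unital {G A : Type*} [Group G] [TopologicalSpace G]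
    [IsTopologicalGroup G] [LocallyCompactSpace G] [T2Space G]
    [NormedRing A] [StarRing A] [CStarRing A] [NormedAlgebra ℂ A] [StarModule ℂ A]
    [CompleteSpace A]
    (α : CStarPartialAction G A) :
    (∃ H : Subgroup G, IsOpen (H : Set G) ∧ ∀ t ∈ H, α.dom t = Set.univ) ∧
    (ConnectedSpace G → ∀ t : G, α.dom t = Set.univ) := by
  classical
  -- Key: an ideal meeting the unit ball around 1 is everything.
  have key : ∀ t : G, (Metric.ball (1 : A) 1 ∩ α.dom t).Nonempty → α.dom t = Set.univ := by
    rintro t ⟨x, hx1, hx2⟩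
    have hnorm : ‖1 - x‖ < 1 := by
      rw [Metric.mem_ball, dist_eq_norm] at hx1
      rwa [norm_sub_rev] at hx1
    have hu : IsUnit x := by
      refine ⟨Units.oneSub (1 - x) hnorm, ?_⟩
      simp [Units.oneSub]
    obtain ⟨u, hu⟩ := hu
    ext a
    simp only [Set.mem_univ, iff_true]
    have ha : a = (a * ↑u⁻¹) * x := by
      rw [mul_assoc, ← hu, Units.inv_mul, mul_one]
    rw [ha]
    exact α.mul_mem_left t _ x hx2
  -- The subgroup of group elements with full domain.
  set W : Subgroup G :=
    { carrier := {t | α.dom t = Set.univ ∧ α.dom t⁻¹ = Set.univ}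
      one_mem' := by simp [α.dom_one]
      inv_mem' := by
        rintro t ⟨h1, h2⟩
        exact ⟨h2, by simpa using h1⟩
      mul_mem' := by
        rintro s t ⟨hs, hs'⟩ ⟨ht, ht'⟩
        constructor
        · ext a
          simp only [Set.mem_univ, iff_true]
          have h := (α.act_comp t⁻¹ s⁻¹ a (by rw [inv_inv, hs]; trivial)
            (by rw [inv_inv, ht]; trivial)).1
          have he : (t⁻¹ * s⁻¹)⁻¹ = s * t := by group
          rwa [he] at h
        · ext a
          simp only [Set.mem_univ, iff_true]
          exact (α.act_comp s t a (by rw [ht']; trivial) (by rw [hs']; trivial)).1 }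
    with hW
  have hmemW : ∀ t ∈ W, α.dom t = Set.univ := fun t ht => ht.1
  -- W is open: it contains an open neighborhood of 1.
  let V : Set G := {t : G | (Metric.ball (1 : A) 1 ∩ α.dom t).Nonempty}
  have hVopen : IsOpen V := α.isOpen_hit _ Metric.isOpen_ball
  have hUopen : IsOpen (V ∩ Inv.inv ⁻¹' V) := hVopen.inter (hVopen.preimage continuous_inv)
  have h1U : (1 : G) ∈ V ∩ Inv.inv ⁻¹' V := by
    have h1V : (1 : G) ∈ V := ⟨1, by simp, by rw [α.dom_one]; trivial⟩
    exact ⟨h1V, by simpa using h1V⟩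
  have hUW : V ∩ Inv.inv ⁻¹' V ⊆ (W : Set G) := by
    rintro t ⟨h1, h2⟩
    exact ⟨key t h1, key t⁻¹ h2⟩
  have hWopen : IsOpen (W : Set G) :=
    Subgroup.isOpen_of_mem_nhds W
      (Filter.mem_of_superset (hUopen.mem_nhds h1U) hUW)
  refine ⟨⟨W, hWopen, hmemW⟩, ?_⟩
  intro hconn t
  have hclosed : IsClosed (W : Set G) := W.isClosed_of_isOpen hWopen
  have : (W : Set G) = Set.univ :=
    IsClopen.eq_univ ⟨hclosed, hWopen⟩ ⟨1, W.one_mem⟩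
  exact hmemW t (by rw [← SetLike.mem_coe, this]; trivial)
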